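/- With L as the sum of d independent geometric random variables with success probabilities 1 - 2^k/2^d for k = 0,...,d-1, the limit as d → ∞ of E(L) - d equals ∑_{k=1}^{∞} 1/(2^k - 1) ≈ 1.606. -/

import Mathlib

open Filter

lemma aux_sum_eq (d : ℕ) :
    (∑ k ∈ Finset.range d, (2 : ℝ) ^ d / ((2 : ℝ) ^ d - 2 ^ k)) - d
      = ∑ k ∈ Finset.range d, (1 : ℝ) / (2 ^ (k + 1) - 1) := by
  have h1 : (∑ k ∈ Finset.range d, (2 : ℝ) ^ d / ((2 : ℝ) ^ d - 2 ^ k)) - d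
      = ∑ k ∈ Finset.range d, ((2 : ℝ) ^ d / ((2 : ℝ) ^ d - 2 ^ k) - 1) := by
    rw [Finset.sum_sub_distrib, Finset.sum_const, Finset.card_range, nsmul_eq_mul, mul_one]
  rw [h1]
  have h2 : ∀ k ∈ Finset.range d,
      (2 : ℝ) ^ d / ((2 : ℝ) ^ d - 2 ^ k) - 1 = (1 : ℝ) / (2 ^ (d - k) - 1) := by
    intro k hk
    rw [Finset.mem_range] at hk
    have hlt : (2 : ℝ) ^ k < 2 ^ d := by
      apply pow_lt_pow_right₀ (by norm_num) hk
    have hne : (2 : ℝ) ^ d - 2 ^ k ≠ 0 := by linarith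
    have hpow : (2 : ℝ) ^ d = 2 ^ k * 2 ^ (d - k) := by
      rw [← pow_add]
      congr 1
      omega
    have hne2 : (2 : ℝ) ^ (d - k) - 1 ≠ 0 := by
      have : (1 : ℝ) < 2 ^ (d - k) := by
        apply one_lt_pow₀ (by norm_num)
        omega
      linarith
    field_simp
    rw [hpow]
    ring
  rw [Finset.sum_congr rfl h2, ← Finset.sum_range_reflect]
  apply Finset.sum_congr rfl
  intro k hk
  rw [Finset.mem_range] at hk
  have h3 : d - (d - 1 - k) = k + 1 := by omega
  rw [h3]

/-- With `E(L) = ∑_{k=0}^{d-1} 2^d/(2^d - 2^k)` the expected number of draws of the greedy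
row-selection process over GF(2), the limit as `d → ∞` of `E(L) - d` equals
`∑_{k=1}^{∞} 1/(2^k - 1)`. -/
theorem stmt_3 :
    Tendsto (fun d : ℕ => (∑ k ∈ Finset.range d, (2 : ℝ) ^ d / ((2 : ℝ) ^ d - 2 ^ k)) - d)
      atTop (nhds (∑' k : ℕ, (1 : ℝ) / (2 ^ (k + 1) - 1))) := by
  have hsum : Summable (fun k : ℕ => (1 : ℝ) / (2 ^ (k + 1) - 1)) := by
    apply Summable.of_nonneg_of_le (f := fun k : ℕ => (1 / 2 : ℝ) ^ k)
    · intro k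
      have : (1 : ℝ) < 2 ^ (k + 1) := one_lt_pow₀ (by norm_num) (by omega)
      apply div_nonneg (by norm_num)
      linarith
    · intro k
      rw [div_pow, one_pow]
      apply div_le_div_of_nonneg_left (by norm_num) (by positivity)
      have : (2 : ℝ) ^ k ≤ 2 ^ (k + 1) - 1 := by
        have : (2 : ℝ) ^ (k + 1) = 2 * 2 ^ k := by ring
        have hk : (1 : ℝ) ≤ 2 ^ k := one_le_pow₀ (by norm_num)
        linarith [this]
      linarith
    · exact summable_geometric_of_lt_one (by norm_num) (by norm_num)
  have := hsum.hasSum.tendsto_sum_nat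
  simpa only [aux_sum_eq] using this
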